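/- Consider two groups with S_G ~ N(μ_G, σ²) and ε_G ~ N(0, τ²) independent, identical variances across groups, and μ_L < μ_H. Then for every cutoff c, P[S_L > c | S_L + ε_L > 0] < P[S_H > c | S_H + ε_H > 0]: the lower-mean group has a strictly smaller true positive rate at every cutoff. -/

import Mathlib

open MeasureTheory ProbabilityTheory

/-- Standard normal density φ. -/
noncomputable def stdNormalPdf (z : ℝ) : ℝ := Real.exp (-z ^ 2 / 2) / Real.sqrt (2 * Real.pi)

/-- Standard normal distribution function Φ. -/
noncomputable def stdNormalCdf (z : ℝ) : ℝ := ((gaussianReal 0 1) (Set.Iic z)).toReal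

open Set
open scoped NNReal ENNReal

/-- Pointwise swap inequality for Gaussian densities with shifted means. -/
lemma gaussianPDFReal_swap {μL μH : ℝ} {v : ℝ≥0} (hv : v ≠ 0) (hμ : μL < μH)
    {s t : ℝ} (hts : t < s) :
    gaussianPDFReal μL v s * gaussianPDFReal μH v t
      < gaussianPDFReal μH v s * gaussianPDFReal μL v t := by
  have hv0 : (0:ℝ) < (v:ℝ) := by
    exact_mod_cast zero_lt_iff.mpr hv
  simp only [gaussianPDFReal]
  set C : ℝ := (Real.sqrt (2 * Real.pi * v))⁻¹ with hCdef
  have hre : ∀ a b : ℝ, C * Real.exp a * (C * Real.exp b) = C * C * Real.exp (a + b) := by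
    intro a b; rw [Real.exp_add]; ring
  rw [hre, hre]
  have hC : (0:ℝ) < C * C := by
    have h2 : (0:ℝ) < 2 * Real.pi * v := by positivity
    rw [hCdef]; positivity
  have key : (-(s - μL)^2 / (2*v) + -(t - μH)^2 / (2*v))
      < (-(s - μH)^2 / (2*v) + -(t - μL)^2 / (2*v)) := by
    rw [← add_div, ← add_div, div_lt_div_iff₀ (by positivity) (by positivity)]
    nlinarith [mul_pos (sub_pos.2 hμ) (sub_pos.2 hts)]
  exact mul_lt_mul_of_pos_left (Real.exp_lt_exp.mpr key) hC

lemma measurableSet_E (c : ℝ) : MeasurableSet {p : ℝ × ℝ | p.1 > c ∧ p.1 + p.2 > 0} :=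
  (measurableSet_lt measurable_const measurable_fst).inter
    (measurableSet_lt measurable_const (measurable_fst.add measurable_snd))

lemma measurableSet_E' (c : ℝ) : MeasurableSet {p : ℝ × ℝ | p.1 ≤ c ∧ p.1 + p.2 > 0} :=
  (measurableSet_le measurable_fst measurable_const).inter
    (measurableSet_lt measurable_const (measurable_fst.add measurable_snd))

lemma measurableSet_T : MeasurableSet {p : ℝ × ℝ | p.1 + p.2 > 0} :=
  measurableSet_lt measurable_const (measurable_fst.add measurable_snd)

/-- The main comparison, stated for product Gaussian measures on `ℝ × ℝ`. -/
lemma tpr_strict_mono {μL μH : ℝ} {v w : ℝ≥0} (hv : v ≠ 0) (hw : w ≠ 0)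
    (hμ : μL < μH) (c : ℝ) :
    (((gaussianReal μL v).prod (gaussianReal 0 w))
        {p : ℝ × ℝ | p.1 > c ∧ p.1 + p.2 > 0}).toReal
      / (((gaussianReal μL v).prod (gaussianReal 0 w)) {p : ℝ × ℝ | p.1 + p.2 > 0}).toReal
    < (((gaussianReal μH v).prod (gaussianReal 0 w))
        {p : ℝ × ℝ | p.1 > c ∧ p.1 + p.2 > 0}).toReal
      / (((gaussianReal μH v).prod (gaussianReal 0 w)) {p : ℝ × ℝ | p.1 + p.2 > 0}).toReal := by
  set ν : Measure ℝ := gaussianReal 0 w with hν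
  set ψ : ℝ → ℝ≥0∞ := fun x => ν (Ioi (-x)) with hψ
  have hψmono : Monotone ψ := fun x y hxy =>
    measure_mono (fun z hz => show -y < z from lt_of_le_of_lt (neg_le_neg hxy) hz)
  have hψmeas : Measurable ψ := hψmono.measurable
  have hψpos : ∀ x, ψ x ≠ 0 := by
    intro x
    have hd : ν = volume.withDensity (gaussianPDF 0 w) := gaussianReal_of_var_ne_zero 0 hw
    have : 0 < ψ x := by
      rw [hψ]
      simp only
      rw [hd, withDensity_apply _ measurableSet_Ioi,
        lintegral_pos_iff_support (measurable_gaussianPDF 0 w)]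
      have hsupp : Function.support (gaussianPDF 0 w) = univ := by
        ext y
        simp only [Function.mem_support, mem_univ, iff_true]
        exact (gaussianPDF_pos 0 hw y).ne'
      rw [hsupp, Measure.restrict_apply_univ, Real.volume_Ioi]
      exact ENNReal.zero_lt_top
    exact this.ne'
  have hψfin : ∀ x, ψ x ≠ ⊤ := fun x => measure_ne_top ν _
  set n : ℝ → ℝ≥0∞ := fun μ0 => ∫⁻ x in Ioi c, gaussianPDF μ0 v x * ψ x ∂volume with hn
  set m : ℝ → ℝ≥0∞ := fun μ0 => ∫⁻ x in Iic c, gaussianPDF μ0 v x * ψ x ∂volume with hm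
  -- identification of the product measures of the relevant sets
  have hprodE : ∀ μ0 : ℝ, ((gaussianReal μ0 v).prod ν)
      {p : ℝ × ℝ | p.1 > c ∧ p.1 + p.2 > 0} = n μ0 := by
    intro μ0
    rw [Measure.prod_apply (measurableSet_E c)]
    have hpoint : ∀ x : ℝ, ν (Prod.mk x ⁻¹' {p : ℝ × ℝ | p.1 > c ∧ p.1 + p.2 > 0})
        = (Ioi c).indicator ψ x := by
      intro x
      by_cases hx : c < x
      · have hset : Prod.mk x ⁻¹' {p : ℝ × ℝ | p.1 > c ∧ p.1 + p.2 > 0} = Ioi (-x) := by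
          ext y
          simp only [mem_preimage, mem_setOf_eq, mem_Ioi]
          constructor
          · rintro ⟨_, h2⟩; linarith
          · intro h; exact ⟨hx, by linarith⟩
        rw [hset, indicator_of_mem (show x ∈ Ioi c from hx)]
      · have hset : Prod.mk x ⁻¹' {p : ℝ × ℝ | p.1 > c ∧ p.1 + p.2 > 0} = ∅ := by
          ext y
          simp only [mem_preimage, mem_setOf_eq, mem_empty_iff_false, iff_false, not_and]
          intro h1; exact absurd h1 hx
        rw [hset, indicator_of_notMem (show x ∉ Ioi c from hx)]
        simp
    simp_rw [hpoint]
    rw [lintegral_indicator measurableSet_Ioi _, gaussianReal_of_var_ne_zero _ hv,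
      restrict_withDensity measurableSet_Ioi,
      lintegral_withDensity_eq_lintegral_mul _ (measurable_gaussianPDF _ v) hψmeas]
    rfl
  have hprodE' : ∀ μ0 : ℝ, ((gaussianReal μ0 v).prod ν)
      {p : ℝ × ℝ | p.1 ≤ c ∧ p.1 + p.2 > 0} = m μ0 := by
    intro μ0
    rw [Measure.prod_apply (measurableSet_E' c)]
    have hpoint : ∀ x : ℝ, ν (Prod.mk x ⁻¹' {p : ℝ × ℝ | p.1 ≤ c ∧ p.1 + p.2 > 0})
        = (Iic c).indicator ψ x := by
      intro x
      by_cases hx : x ≤ c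
      · have hset : Prod.mk x ⁻¹' {p : ℝ × ℝ | p.1 ≤ c ∧ p.1 + p.2 > 0} = Ioi (-x) := by
          ext y
          simp only [mem_preimage, mem_setOf_eq, mem_Ioi]
          constructor
          · rintro ⟨_, h2⟩; linarith
          · intro h; exact ⟨hx, by linarith⟩
        rw [hset, indicator_of_mem (show x ∈ Iic c from hx)]
      · have hset : Prod.mk x ⁻¹' {p : ℝ × ℝ | p.1 ≤ c ∧ p.1 + p.2 > 0} = ∅ := by
          ext y
          simp only [mem_preimage, mem_setOf_eq, mem_empty_iff_false, iff_false, not_and]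
          intro h1; exact absurd h1 hx
        rw [hset, indicator_of_notMem (show x ∉ Iic c from hx)]
        simp
    simp_rw [hpoint]
    rw [lintegral_indicator measurableSet_Iic _, gaussianReal_of_var_ne_zero _ hv,
      restrict_withDensity measurableSet_Iic,
      lintegral_withDensity_eq_lintegral_mul _ (measurable_gaussianPDF _ v) hψmeas]
    rfl
  have hprodT : ∀ μ0 : ℝ, ((gaussianReal μ0 v).prod ν)
      {p : ℝ × ℝ | p.1 + p.2 > 0} = n μ0 + m μ0 := by
    intro μ0
    have hsplit : {p : ℝ × ℝ | p.1 + p.2 > 0}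
        = {p : ℝ × ℝ | p.1 > c ∧ p.1 + p.2 > 0} ∪ {p : ℝ × ℝ | p.1 ≤ c ∧ p.1 + p.2 > 0} := by
      ext p
      simp only [mem_setOf_eq, mem_union]
      constructor
      · intro h
        rcases lt_or_ge c p.1 with h1 | h1
        · exact Or.inl ⟨h1, h⟩
        · exact Or.inr ⟨h1, h⟩
      · rintro (⟨_, h⟩ | ⟨_, h⟩) <;> exact h
    have hdisj : Disjoint {p : ℝ × ℝ | p.1 > c ∧ p.1 + p.2 > 0}
        {p : ℝ × ℝ | p.1 ≤ c ∧ p.1 + p.2 > 0} := by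
      rw [Set.disjoint_left]
      rintro p ⟨h1, -⟩ ⟨h2, -⟩
      exact absurd h1 (not_lt.2 h2)
    rw [hsplit, measure_union hdisj (measurableSet_E' c), hprodE, hprodE']
  -- basic bounds
  have hn_le : ∀ μ0 : ℝ, n μ0 ≤ 1 := by
    intro μ0
    rw [← hprodE μ0]
    exact prob_le_one
  have hm_le : ∀ μ0 : ℝ, m μ0 ≤ 1 := by
    intro μ0
    rw [← hprodE' μ0]
    exact prob_le_one
  have hn_fin : ∀ μ0 : ℝ, n μ0 ≠ ⊤ := fun μ0 => (lt_of_le_of_lt (hn_le μ0) ENNReal.one_lt_top).ne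
  have hm_fin : ∀ μ0 : ℝ, m μ0 ≠ ⊤ := fun μ0 => (lt_of_le_of_lt (hm_le μ0) ENNReal.one_lt_top).ne
  have hn_pos : ∀ μ0 : ℝ, 0 < n μ0 := by
    intro μ0
    rw [hn]
    simp only
    rw [lintegral_pos_iff_support (f := fun x => gaussianPDF μ0 v x * ψ x)
      ((measurable_gaussianPDF _ v).mul hψmeas)]
    have hsupp : (Function.support fun x => gaussianPDF μ0 v x * ψ x) = univ := by
      ext x
      simp only [Function.mem_support, mem_univ, iff_true]
      exact mul_ne_zero (gaussianPDF_pos _ hv x).ne' (hψpos x)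
    rw [hsupp, Measure.restrict_apply_univ, Real.volume_Ioi]
    exact ENNReal.zero_lt_top
  have hm_pos : ∀ μ0 : ℝ, 0 < m μ0 := by
    intro μ0
    rw [hm]
    simp only
    rw [lintegral_pos_iff_support (f := fun x => gaussianPDF μ0 v x * ψ x)
      ((measurable_gaussianPDF _ v).mul hψmeas)]
    have hsupp : (Function.support fun x => gaussianPDF μ0 v x * ψ x) = univ := by
      ext x
      simp only [Function.mem_support, mem_univ, iff_true]
      exact mul_ne_zero (gaussianPDF_pos _ hv x).ne' (hψpos x)
    rw [hsupp, Measure.restrict_apply_univ, Real.volume_Iic]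
    exact ENNReal.zero_lt_top
  -- the key rearrangement inequality
  have hmeasf : ∀ μ1 μ2 : ℝ, Measurable fun p : ℝ × ℝ =>
      (gaussianPDF μ1 v p.1 * ψ p.1) * (gaussianPDF μ2 v p.2 * ψ p.2) := by
    intro μ1 μ2
    exact (((measurable_gaussianPDF _ v).mul hψmeas).comp measurable_fst).mul
      (((measurable_gaussianPDF _ v).mul hψmeas).comp measurable_snd)
  have key : n μL * m μH < n μH * m μL := by
    have hprodform : ∀ μ1 μ2 : ℝ, n μ1 * m μ2 = ∫⁻ p : ℝ × ℝ,
        (gaussianPDF μ1 v p.1 * ψ p.1) * (gaussianPDF μ2 v p.2 * ψ p.2)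
          ∂((volume.restrict (Ioi c)).prod (volume.restrict (Iic c))) := by
      intro μ1 μ2
      exact (lintegral_prod_mul (μ := volume.restrict (Ioi c)) (ν := volume.restrict (Iic c))
        ((measurable_gaussianPDF _ v).mul hψmeas).aemeasurable
        ((measurable_gaussianPDF _ v).mul hψmeas).aemeasurable).symm
    rw [hprodform, hprodform]
    have hfin : (∫⁻ p : ℝ × ℝ,
        (gaussianPDF μL v p.1 * ψ p.1) * (gaussianPDF μH v p.2 * ψ p.2)
          ∂((volume.restrict (Ioi c)).prod (volume.restrict (Iic c)))) ≠ ⊤ := by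
      rw [← hprodform]
      exact (lt_of_le_of_lt (mul_le_one' (hn_le μL) (hm_le μH)) ENNReal.one_lt_top).ne
    refine lintegral_strict_mono ?_ (hmeasf μH μL).aemeasurable hfin ?_
    · intro h0
      have h1 : ((volume.restrict (Ioi c)).prod (volume.restrict (Iic c))) univ = 0 := by
        rw [h0]; rfl
      rw [← univ_prod_univ, Measure.prod_prod, Measure.restrict_apply_univ,
        Measure.restrict_apply_univ, Real.volume_Ioi, Real.volume_Iic] at h1
      simp at h1
    · have hρeq : (volume.restrict (Ioi c)).prod (volume.restrict (Iic c))
          = (volume.prod volume).restrict ((Ioi c) ×ˢ (Iic c)) := by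
        rw [Measure.prod_restrict]
      have hae : ∀ᵐ p : ℝ × ℝ ∂((volume.restrict (Ioi c)).prod (volume.restrict (Iic c))),
          p ∈ (Ioi c) ×ˢ (Iic c) := by
        rw [hρeq]
        exact ae_restrict_mem (measurableSet_Ioi.prod measurableSet_Iic)
      filter_upwards [hae] with p hp
      have hp1 : c < p.1 := hp.1
      have hp2 : p.2 ≤ c := hp.2
      have hts : p.2 < p.1 := lt_of_le_of_lt hp2 hp1
      have hreal := gaussianPDFReal_swap (v := v) hv hμ hts
      have hA : gaussianPDF μL v p.1 * gaussianPDF μH v p.2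
          < gaussianPDF μH v p.1 * gaussianPDF μL v p.2 := by
        simp only [gaussianPDF]
        rw [← ENNReal.ofReal_mul (gaussianPDFReal_nonneg _ _ _),
          ← ENNReal.ofReal_mul (gaussianPDFReal_nonneg _ _ _)]
        exact ENNReal.ofReal_lt_ofReal_iff
          (mul_pos (gaussianPDFReal_pos _ v _ hv) (gaussianPDFReal_pos _ v _ hv)) |>.mpr hreal
      have rearr : ∀ a b : ℝ≥0∞, (a * ψ p.1) * (b * ψ p.2) = (a * b) * (ψ p.1 * ψ p.2) := by
        intro a b; ring
      rw [rearr, rearr]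
      exact ENNReal.mul_lt_mul_left (mul_ne_zero (hψpos _) (hψpos _))
        (ENNReal.mul_ne_top (hψfin _) (hψfin _)) hA
  -- conclude by real arithmetic
  rw [hprodE μL, hprodE μH, hprodT μL, hprodT μH,
    ENNReal.toReal_add (hn_fin μL) (hm_fin μL), ENNReal.toReal_add (hn_fin μH) (hm_fin μH)]
  have haL : 0 < (n μL).toReal := ENNReal.toReal_pos (hn_pos μL).ne' (hn_fin μL)
  have hbL : 0 < (m μL).toReal := ENNReal.toReal_pos (hm_pos μL).ne' (hm_fin μL)
  have haH : 0 < (n μH).toReal := ENNReal.toReal_pos (hn_pos μH).ne' (hn_fin μH)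
  have hbH : 0 < (m μH).toReal := ENNReal.toReal_pos (hm_pos μH).ne' (hm_fin μH)
  have hkey' : (n μL).toReal * (m μH).toReal < (n μH).toReal * (m μL).toReal := by
    have := (ENNReal.toReal_lt_toReal
      (ENNReal.mul_ne_top (hn_fin μL) (hm_fin μH))
      (ENNReal.mul_ne_top (hn_fin μH) (hm_fin μL))).mpr key
    rwa [ENNReal.toReal_mul, ENNReal.toReal_mul] at this
  rw [div_lt_div_iff₀ (by positivity) (by positivity)]
  nlinarith

theorem lower_mean_group_lower_tpr
    {Ω : Type*} [MeasurableSpace Ω] (P : Measure Ω) [IsProbabilityMeasure P]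
    (SL εL SH εH : Ω → ℝ)
    (hSL : Measurable SL) (hεL : Measurable εL)
    (hSH : Measurable SH) (hεH : Measurable εH)
    (μL μH σ τ : ℝ) (hσ : 0 < σ) (hτ : 0 < τ) (hμ : μL < μH)
    (hSLlaw : P.map SL = gaussianReal μL (Real.toNNReal (σ ^ 2)))
    (hSHlaw : P.map SH = gaussianReal μH (Real.toNNReal (σ ^ 2)))
    (hεLlaw : P.map εL = gaussianReal 0 (Real.toNNReal (τ ^ 2)))
    (hεHlaw : P.map εH = gaussianReal 0 (Real.toNNReal (τ ^ 2)))
    (hindepL : IndepFun SL εL P) (hindepH : IndepFun SH εH P) (c : ℝ) :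
    (P ({ω | SL ω > c} ∩ {ω | SL ω + εL ω > 0})).toReal
        / (P {ω | SL ω + εL ω > 0}).toReal
      < (P ({ω | SH ω > c} ∩ {ω | SH ω + εH ω > 0})).toReal
          / (P {ω | SH ω + εH ω > 0}).toReal := by
  have hv : Real.toNNReal (σ ^ 2) ≠ 0 :=
    (Real.toNNReal_pos.mpr (by positivity)).ne'
  have hw : Real.toNNReal (τ ^ 2) ≠ 0 :=
    (Real.toNNReal_pos.mpr (by positivity)).ne'
  have hmapL := (indepFun_iff_map_prod_eq_prod_map_map hSL.aemeasurable hεL.aemeasurable).mp hindepL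
  have hmapH := (indepFun_iff_map_prod_eq_prod_map_map hSH.aemeasurable hεH.aemeasurable).mp hindepH
  rw [hSLlaw, hεLlaw] at hmapL
  rw [hSHlaw, hεHlaw] at hmapH
  have hsetL1 : {ω | SL ω > c} ∩ {ω | SL ω + εL ω > 0}
      = (fun ω => (SL ω, εL ω)) ⁻¹' {p : ℝ × ℝ | p.1 > c ∧ p.1 + p.2 > 0} := by
    ext ω; simp [Set.mem_inter_iff]
  have hsetL2 : {ω | SL ω + εL ω > 0}
      = (fun ω => (SL ω, εL ω)) ⁻¹' {p : ℝ × ℝ | p.1 + p.2 > 0} := rfl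
  have hsetH1 : {ω | SH ω > c} ∩ {ω | SH ω + εH ω > 0}
      = (fun ω => (SH ω, εH ω)) ⁻¹' {p : ℝ × ℝ | p.1 > c ∧ p.1 + p.2 > 0} := by
    ext ω; simp [Set.mem_inter_iff]
  have hsetH2 : {ω | SH ω + εH ω > 0}
      = (fun ω => (SH ω, εH ω)) ⁻¹' {p : ℝ × ℝ | p.1 + p.2 > 0} := rfl
  rw [hsetL1, hsetL2, hsetH1, hsetH2,
    ← Measure.map_apply (hSL.prodMk hεL) (measurableSet_E c),
    ← Measure.map_apply (hSL.prodMk hεL) measurableSet_T,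
    ← Measure.map_apply (hSH.prodMk hεH) (measurableSet_E c),
    ← Measure.map_apply (hSH.prodMk hεH) measurableSet_T,
    hmapL, hmapH]
  exact tpr_strict_mono hv hw hμ c
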